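/- arXiv:1912.09155 — 2 statements merged into one kernel-verified Lean document; each statement's English description precedes it below -/
import Mathlib

section
/- Let K be an infinite field and let F = K(t) be the field of rational functions over K (a purely transcendental extension). Then K is existentially closed in F: every existential first-order sentence in the language of rings with parameters from K that holds in F also holds in K. -/
open FirstOrder Language Polynomial

noncomputable instance fieldRingStructure (R : Type*) [Field R] : Language.ring.Structure R :=
  (FirstOrder.Ring.compatibleRingOfRing R).toStructure

noncomputable instance fieldCompatibleRing (R : Type*) [Field R] :
    FirstOrder.Ring.CompatibleRing R :=
  FirstOrder.Ring.compatibleRingOfRing R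

section Aux

variable {K : Type*} [Field K]

private lemma aux_denom_dvd_ne_zero {c : K} {x y z : RatFunc K}
    (hdvd : z.denom ∣ x.denom * y.denom)
    (hx : Polynomial.eval₂ (RingHom.id K) c x.denom ≠ 0)
    (hy : Polynomial.eval₂ (RingHom.id K) c y.denom ≠ 0) :
    Polynomial.eval₂ (RingHom.id K) c z.denom ≠ 0 := by
  intro h
  have h2 := Polynomial.eval₂_eq_zero_of_dvd_of_eval₂_eq_zero (RingHom.id K) c hdvd h
  rw [Polynomial.eval₂_mul] at h2
  rcases mul_eq_zero.mp h2 with h3 | h3 <;> [exact hx h3; exact hy h3]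

private lemma aux_neg_eq {x : RatFunc K} : -x = RatFunc.C (-1) * x := by
  rw [map_neg, map_one, neg_one_mul]

private lemma aux_denom_neg {c : K} {x : RatFunc K}
    (hx : Polynomial.eval₂ (RingHom.id K) c x.denom ≠ 0) :
    Polynomial.eval₂ (RingHom.id K) c (-x).denom ≠ 0 := by
  have hC : Polynomial.eval₂ (RingHom.id K) c (RatFunc.C (-1 : K)).denom ≠ 0 := by
    rw [RatFunc.denom_C]; simp
  refine aux_denom_dvd_ne_zero (x := RatFunc.C (-1)) (y := x) ?_ hC hx
  rw [aux_neg_eq (x := x)]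
  exact RatFunc.denom_mul_dvd _ _

private lemma aux_eval_neg {c : K} {x : RatFunc K}
    (hx : Polynomial.eval₂ (RingHom.id K) c x.denom ≠ 0) :
    (-x).eval (RingHom.id K) c = -(x.eval (RingHom.id K) c) := by
  have hC : Polynomial.eval₂ (RingHom.id K) c (RatFunc.C (-1 : K)).denom ≠ 0 := by
    rw [RatFunc.denom_C]; simp
  rw [aux_neg_eq, RatFunc.eval_mul (hx := hC) (hy := hx), RatFunc.eval_C]
  simp

private lemma aux_term_eval {α : Type*} (c : K) (vF : α → RatFunc K)
    (h1 : ∀ x, Polynomial.eval₂ (RingHom.id K) c (vF x).denom ≠ 0)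
    (τ : Language.ring.Term α) :
    Polynomial.eval₂ (RingHom.id K) c (τ.realize vF).denom ≠ 0 ∧
      (τ.realize vF).eval (RingHom.id K) c
        = τ.realize (fun x => (vF x).eval (RingHom.id K) c) := by
  induction τ with
  | var x => exact ⟨h1 x, rfl⟩
  | func f ts ih =>
    cases f with
    | add =>
      obtain ⟨hd0, he0⟩ := ih 0
      obtain ⟨hd1, he1⟩ := ih 1
      show Polynomial.eval₂ (RingHom.id K) c ((ts 0).realize vF + (ts 1).realize vF).denom ≠ 0 ∧ ((ts 0).realize vF + (ts 1).realize vF).eval (RingHom.id K) c = (ts 0).realize (fun x => (vF x).eval (RingHom.id K) c) + (ts 1).realize (fun x => (vF x).eval (RingHom.id K) c)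
      exact ⟨aux_denom_dvd_ne_zero (RatFunc.denom_add_dvd _ _) hd0 hd1,
        by rw [RatFunc.eval_add (hx := hd0) (hy := hd1), he0, he1]⟩
    | mul =>
      obtain ⟨hd0, he0⟩ := ih 0
      obtain ⟨hd1, he1⟩ := ih 1
      show Polynomial.eval₂ (RingHom.id K) c ((ts 0).realize vF * (ts 1).realize vF).denom ≠ 0 ∧ ((ts 0).realize vF * (ts 1).realize vF).eval (RingHom.id K) c = (ts 0).realize (fun x => (vF x).eval (RingHom.id K) c) * (ts 1).realize (fun x => (vF x).eval (RingHom.id K) c)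
      exact ⟨aux_denom_dvd_ne_zero (RatFunc.denom_mul_dvd _ _) hd0 hd1,
        by rw [RatFunc.eval_mul (hx := hd0) (hy := hd1), he0, he1]⟩
    | neg =>
      obtain ⟨hd0, he0⟩ := ih 0
      show Polynomial.eval₂ (RingHom.id K) c (-(ts 0).realize vF).denom ≠ 0 ∧ (-(ts 0).realize vF).eval (RingHom.id K) c = -(ts 0).realize (fun x => (vF x).eval (RingHom.id K) c)
      exact ⟨aux_denom_neg hd0, by rw [aux_eval_neg hd0, he0]⟩
    | zero =>
      show Polynomial.eval₂ (RingHom.id K) c ((0 : RatFunc K)).denom ≠ 0 ∧ ((0 : RatFunc K)).eval (RingHom.id K) c = 0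
      refine ⟨?_, by rw [RatFunc.eval_zero]⟩
      rw [RatFunc.denom_zero]; simp
    | one =>
      show Polynomial.eval₂ (RingHom.id K) c ((1 : RatFunc K)).denom ≠ 0 ∧ ((1 : RatFunc K)).eval (RingHom.id K) c = 1
      refine ⟨?_, by rw [RatFunc.eval_one]⟩
      rw [RatFunc.denom_one]; simp

private lemma aux_qf_step {α : Type*} {k : ℕ}
    (ψ : Language.ring.BoundedFormula α k) (hψ : ψ.IsQF) :
    ∀ (vF : α → RatFunc K) (xsF : Fin k → RatFunc K),
    ∃ s : Set K, s.Finite ∧ ∀ c ∉ s,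
      (∀ y : α ⊕ Fin k,
        Polynomial.eval₂ (RingHom.id K) c ((Sum.elim vF xsF y).denom) ≠ 0) →
      (ψ.Realize vF xsF ↔
        ψ.Realize (fun x => (vF x).eval (RingHom.id K) c)
          (fun i => (xsF i).eval (RingHom.id K) c)) := by
  induction hψ with
  | falsum =>
    intro vF xsF
    exact ⟨∅, Set.finite_empty, fun c _ _ => Iff.rfl⟩
  | of_isAtomic h =>
    cases h with
    | equal t₁ t₂ =>
      intro vF xsF
      set r₁ := t₁.realize (Sum.elim vF xsF) with hr₁
      set r₂ := t₂.realize (Sum.elim vF xsF) with hr₂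
      by_cases heq : r₁ = r₂
      · refine ⟨∅, Set.finite_empty, fun c _ hden => ?_⟩
        obtain ⟨hd1, he1⟩ := aux_term_eval c _ hden t₁
        obtain ⟨hd2, he2⟩ := aux_term_eval c _ hden t₂
        simp only [BoundedFormula.realize_bdEqual]
        have hSum : Sum.elim (fun x => (vF x).eval (RingHom.id K) c)
            (fun i => (xsF i).eval (RingHom.id K) c)
            = fun y => ((Sum.elim vF xsF) y).eval (RingHom.id K) c := by
          funext y; cases y <;> rfl
        rw [hSum, ← he1, ← he2]
        exact iff_of_true heq (by rw [← hr₁, ← hr₂, heq])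
      · refine ⟨{c | Polynomial.eval₂ (RingHom.id K) c (r₁ - r₂).num = 0},
          ?_, fun c hc hden => ?_⟩
        · exact Polynomial.finite_setOf_isRoot
            (RatFunc.num_ne_zero (sub_ne_zero_of_ne heq))
        · obtain ⟨hd1, he1⟩ := aux_term_eval c _ hden t₁
          obtain ⟨hd2, he2⟩ := aux_term_eval c _ hden t₂
          simp only [BoundedFormula.realize_bdEqual]
          have hSum : Sum.elim (fun x => (vF x).eval (RingHom.id K) c)
              (fun i => (xsF i).eval (RingHom.id K) c)
              = fun y => ((Sum.elim vF xsF) y).eval (RingHom.id K) c := by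
            funext y; cases y <;> rfl
          rw [hSum, ← he1, ← he2]
          refine iff_of_false heq ?_
          intro habs
          have hdneg : Polynomial.eval₂ (RingHom.id K) c (-r₂).denom ≠ 0 :=
            aux_denom_neg hd2
          have hsub : (r₁ - r₂).eval (RingHom.id K) c
              = r₁.eval (RingHom.id K) c - r₂.eval (RingHom.id K) c := by
            rw [sub_eq_add_neg, RatFunc.eval_add (hx := hd1) (hy := hdneg), aux_eval_neg hd2,
              ← sub_eq_add_neg]
          have hz : (r₁ - r₂).eval (RingHom.id K) c = 0 := by
            rw [hsub, habs, sub_self]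
          have hdsub : Polynomial.eval₂ (RingHom.id K) c (r₁ - r₂).denom ≠ 0 := by
            refine aux_denom_dvd_ne_zero (x := r₁) (y := -r₂) ?_ hd1 hdneg
            rw [sub_eq_add_neg]
            exact RatFunc.denom_add_dvd _ _
          have hnum : Polynomial.eval₂ (RingHom.id K) c (r₁ - r₂).num ≠ 0 := hc
          rw [RatFunc.eval] at hz
          rcases div_eq_zero_iff.mp hz with h | h
          · exact hnum h
          · exact hdsub h
    | rel R ts => exact isEmptyElim R
  | imp h₁ h₂ ih₁ ih₂ =>
    intro vF xsF
    obtain ⟨s₁, hs₁, hgood₁⟩ := ih₁ vF xsF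
    obtain ⟨s₂, hs₂, hgood₂⟩ := ih₂ vF xsF
    refine ⟨s₁ ∪ s₂, hs₁.union hs₂, fun c hc hden => ?_⟩
    simp only [BoundedFormula.realize_imp]
    rw [hgood₁ c (fun h => hc (Set.mem_union_left _ h)) hden,
      hgood₂ c (fun h => hc (Set.mem_union_right _ h)) hden]

end Aux

/-- An infinite field `K` is existentially closed in the rational function field
`K(t)`: every existential ring-sentence with parameters from `K` true in `K(t)`
is true in `K`. -/
theorem infinite_field_existentiallyClosed_in_ratFunc
    (K : Type*) [Field K] [Infinite K]
    (m n : ℕ) (φ : Language.ring.Formula (Fin m ⊕ Fin n)) (hφ : φ.IsQF)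
    (a : Fin m → K)
    (hF : ∃ b : Fin n → RatFunc K,
      φ.Realize (Sum.elim (fun i => algebraMap K (RatFunc K) (a i)) b)) :
    ∃ b : Fin n → K, φ.Realize (Sum.elim a b) := by
  obtain ⟨b, hb⟩ := hF
  set vF : (Fin m ⊕ Fin n) → RatFunc K :=
    Sum.elim (fun i => algebraMap K (RatFunc K) (a i)) b with hvF
  obtain ⟨s, hs, hgood⟩ := aux_qf_step φ hφ vF default
  set bad : Set K := s ∪ ⋃ i : Fin n,
    {c | Polynomial.eval₂ (RingHom.id K) c (b i).denom = 0} with hbad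
  have hbadfin : bad.Finite := by
    refine hs.union (Set.finite_iUnion fun i => ?_)
    exact Polynomial.finite_setOf_isRoot (RatFunc.denom_ne_zero _)
  obtain ⟨c, hc⟩ := hbadfin.infinite_compl.nonempty
  rw [Set.mem_compl_iff, hbad, Set.mem_union, not_or] at hc
  obtain ⟨hcs, hcden⟩ := hc
  have hden : ∀ y : (Fin m ⊕ Fin n) ⊕ Fin 0,
      Polynomial.eval₂ (RingHom.id K) c ((Sum.elim vF default y).denom) ≠ 0 := by
    rintro ((i | i) | j)
    · simp only [hvF, Sum.elim_inl, RatFunc.algebraMap_eq_C, RatFunc.denom_C]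
      simp
    · simp only [hvF, Sum.elim_inr]
      intro h
      exact hcden (Set.mem_iUnion.2 ⟨_, h⟩)
    · exact Fin.elim0 j
  have hiff := hgood c hcs hden
  refine ⟨fun i => (b i).eval (RingHom.id K) c, ?_⟩
  have hval : (fun x => (vF x).eval (RingHom.id K) c)
      = Sum.elim a (fun i => (b i).eval (RingHom.id K) c) := by
    funext x
    cases x with
    | inl i =>
      show (algebraMap K (RatFunc K) (a i)).eval (RingHom.id K) c = a i
      rw [RatFunc.algebraMap_eq_C, RatFunc.eval_C, RingHom.id_apply]
    | inr i => rfl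
  unfold Formula.Realize at hb ⊢
  have := hiff.mp (by convert hb using 2)
  rw [hval] at this
  convert this using 2
end

section
/- Let K be a field, F(x), G(x) ∈ K[x] with G ≠ 0, and let g(x,y) ∈ K[x,y]. If G(x)·y − F(x) does not divide g(x,y) in K[x,y] and F, G are coprime, then g(x, F(x)/G(x)) is a nonzero element of the rational function field K(x). -/
open Polynomial

/-- If `G(x)·y − F(x)` does not divide `g(x,y)` in `K[x,y]` and `F, G` are coprime
with `G ≠ 0`, then `g(x, F(x)/G(x))` is a nonzero element of `K(x)`. -/
theorem eval_at_FdivG_ne_zero_of_not_dvd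
    (K : Type*) [Field K] (F G : Polynomial K) (hG : G ≠ 0)
    (g : Polynomial (Polynomial K))
    (hdvd : ¬ ((C G) * X - C F ∣ g))
    (hcop : IsCoprime F G) :
    Polynomial.eval₂ (algebraMap (Polynomial K) (RatFunc K))
      (algebraMap (Polynomial K) (RatFunc K) F / algebraMap (Polynomial K) (RatFunc K) G)
      g ≠ 0 := by
  set φ := algebraMap (Polynomial K) (RatFunc K) with hφ
  set t : RatFunc K := φ F / φ G with ht
  set p : Polynomial (Polynomial K) := C G * X - C F with hp
  classical
  letI : NormalizedGCDMonoid (Polynomial K) :=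
    UniqueFactorizationMonoid.toNormalizedGCDMonoid _
  intro h0
  apply hdvd
  have hg0 : g ≠ 0 := by rintro rfl; exact hdvd (dvd_zero _)
  have hφG : φ G ≠ 0 := by
    simpa using (map_ne_zero_iff φ (IsFractionRing.injective _ _)).mpr hG
  -- p is primitive
  have hprim : p.IsPrimitive := by
    intro r hr
    have hcoeff := (C_dvd_iff_dvd_coeff r p).mp hr
    have h1 : r ∣ G := by simpa [hp] using hcoeff 1
    have h2 : r ∣ -F := by simpa [hp] using hcoeff 0
    obtain ⟨a, b, hab⟩ := hcop
    exact isUnit_of_dvd_one (by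
      rw [← hab]
      exact dvd_add (Dvd.dvd.mul_left ((dvd_neg.mp h2)) a) (h1.mul_left b))
  -- p.map φ divides g.map φ
  have hroot : (g.map φ).eval t = 0 := by
    rwa [eval_map] at *
  have hdvd1 : (X - C t) ∣ g.map φ := (dvd_iff_isRoot).mpr hroot
  have hpmap : p.map φ = C (φ G) * (X - C t) := by
    rw [hp]
    push_cast [Polynomial.map_sub, Polynomial.map_mul, map_C, map_X, mul_sub, ← C_mul]
    congr 2
    field_simp [ht]
    rw [ht, mul_div_assoc', eq_div_iff hφG, mul_comm]
  have hdvd2 : p.map φ ∣ g.map φ := by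
    rw [hpmap]
    rw [mul_comm]
    exact ((isUnit_C.mpr (isUnit_iff_ne_zero.mpr hφG)).mul_right_dvd).mpr hdvd1
  -- reduce to primitive parts via Gauss
  have hgp : p.map φ ∣ (g.primPart).map φ := by
    have : g = C g.content * g.primPart := g.eq_C_content_mul_primPart
    have hcont : g.content ≠ 0 := fun h => hg0 (content_eq_zero_iff.mp h)
    have hu : IsUnit (C (φ g.content)) :=
      isUnit_C.mpr ((map_ne_zero_iff φ (IsFractionRing.injective _ _)).mpr hcont).isUnit
    have : g.map φ = C (φ g.content) * (g.primPart).map φ := by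
      conv_lhs => rw [this]
      simp [Polynomial.map_mul]
    rw [this] at hdvd2
    exact hu.dvd_mul_left.mp hdvd2
  have : p ∣ g.primPart :=
    hprim.dvd_of_fraction_map_dvd_fraction_map hgp
  exact this.trans g.primPart_dvd
end
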